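/- Let y ∈ ℝ^N, let K and K̃ be N×N real symmetric positive semidefinite matrices with ‖K̃ − K‖ ≤ Nε for some ε > 0, let σ > 0, and let α, α̃ ∈ ℝ^N solve (K + σ²I)α = y and (K̃ + σ²I)α̃ = y. (i) With μ = Kα and μ̃ = K̃α̃, we have ‖μ̃ − μ‖ / ‖y‖ ≤ (N/σ²) ε (whenever y ≠ 0). (ii) If in addition k_x, k̃_x ∈ ℝ^N satisfy ‖k_x‖ ≤ √N and ‖k̃_x − k_x‖ ≤ √N ε, then with μ(x) = k_xᵀ α and μ̃(x) = k̃_xᵀ α̃ we have |μ̃(x) − μ(x)| / (‖y‖/√N) ≤ (N²/σ⁴ + N/σ²) ε (whenever y ≠ 0). -/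

import Mathlib

/-- Operator (spectral) norm of a real square matrix, induced by the Euclidean norm. -/
noncomputable def opNorm {N : ℕ} (A : Matrix (Fin N) (Fin N) ℝ) : ℝ :=
  ‖Matrix.toEuclideanCLM (𝕜 := ℝ) A‖

/-- Euclidean norm of a vector in `ℝ^N`. -/
noncomputable def vecNorm {N : ℕ} (v : Fin N → ℝ) : ℝ :=
  Real.sqrt (∑ i, v i ^ 2)

lemma vecNorm_eq {N : ℕ} (v : Fin N → ℝ) :
    vecNorm v = ‖(WithLp.equiv 2 (Fin N → ℝ)).symm v‖ := by
  rw [EuclideanSpace.norm_eq, vecNorm]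
  congr 1
  apply Finset.sum_congr rfl
  intro i _
  simp [Real.norm_eq_abs, sq_abs]

lemma dot_eq_inner {N : ℕ} (v w : Fin N → ℝ) :
    dotProduct v w =
      inner ℝ ((WithLp.equiv 2 (Fin N → ℝ)).symm v) ((WithLp.equiv 2 (Fin N → ℝ)).symm w) := by
  simp [dotProduct, PiLp.inner_apply, RCLike.inner_apply, mul_comm]

lemma dot_abs_le {N : ℕ} (v w : Fin N → ℝ) :
    |dotProduct v w| ≤ vecNorm v * vecNorm w := by
  rw [dot_eq_inner, vecNorm_eq, vecNorm_eq]
  exact abs_real_inner_le_norm _ _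

lemma mulVec_norm_le {N : ℕ} (A : Matrix (Fin N) (Fin N) ℝ) (v : Fin N → ℝ) :
    vecNorm (A.mulVec v) ≤ opNorm A * vecNorm v := by
  rw [vecNorm_eq, vecNorm_eq]
  exact (Matrix.toEuclideanCLM (𝕜 := ℝ) A).le_opNorm _

lemma vecNorm_nonneg {N : ℕ} (v : Fin N → ℝ) : 0 ≤ vecNorm v := Real.sqrt_nonneg _

lemma vecNorm_smul {N : ℕ} (c : ℝ) (v : Fin N → ℝ) : vecNorm (c • v) = |c| * vecNorm v := by
  rw [vecNorm_eq, vecNorm_eq, ← Real.norm_eq_abs, ← norm_smul]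
  congr 1

lemma vecNorm_neg {N : ℕ} (v : Fin N → ℝ) : vecNorm (-v) = vecNorm v := by
  unfold vecNorm
  congr 1
  apply Finset.sum_congr rfl
  intro i _
  simp

lemma lower {N : ℕ} {M : Matrix (Fin N) (Fin N) ℝ} (hM : M.PosSemidef) {σ : ℝ} (hσ : 0 < σ)
    (v : Fin N → ℝ) : σ ^ 2 * vecNorm v ≤ vecNorm ((M + σ ^ 2 • 1).mulVec v) := by
  have hnn : 0 ≤ vecNorm v := vecNorm_nonneg v
  rcases eq_or_lt_of_le hnn with h0 | hpos
  · rw [← h0, mul_zero]; exact vecNorm_nonneg _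
  · have h1 : dotProduct v ((M + σ ^ 2 • 1).mulVec v)
        = dotProduct v (M.mulVec v) + σ ^ 2 * dotProduct v v := by
      rw [Matrix.add_mulVec, Matrix.smul_mulVec, Matrix.one_mulVec,
        dotProduct_add, dotProduct_smul, smul_eq_mul]
    have h2 : 0 ≤ dotProduct v (M.mulVec v) := by
      have := hM.dotProduct_mulVec_nonneg v
      simpa using this
    have h3 : dotProduct v v = vecNorm v ^ 2 := by
      rw [vecNorm, Real.sq_sqrt (by positivity)]
      simp [dotProduct, sq]
    have h4 : dotProduct v ((M + σ ^ 2 • 1).mulVec v)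
        ≤ vecNorm v * vecNorm ((M + σ ^ 2 • 1).mulVec v) :=
      (le_abs_self _).trans (dot_abs_le _ _)
    have key : σ ^ 2 * vecNorm v * vecNorm v ≤ vecNorm ((M + σ ^ 2 • 1).mulVec v) * vecNorm v := by
      nlinarith [h1, h2, h3, h4]
    exact le_of_mul_le_mul_right key hpos

theorem stmt_12 (N : ℕ) (y : Fin N → ℝ) (hy : y ≠ 0)
    (K Ktil : Matrix (Fin N) (Fin N) ℝ)
    (hK : K.PosSemidef) (hKt : Ktil.PosSemidef)
    (ε : ℝ) (hε : 0 < ε) (hKKt : opNorm (Ktil - K) ≤ N * ε)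
    (σ : ℝ) (hσ : 0 < σ) (α αt : Fin N → ℝ)
    (hα : (K + σ ^ 2 • 1).mulVec α = y) (hαt : (Ktil + σ ^ 2 • 1).mulVec αt = y) :
    vecNorm (Ktil.mulVec αt - K.mulVec α) / vecNorm y ≤ N / σ ^ 2 * ε ∧
    ∀ kx ktx : Fin N → ℝ, vecNorm kx ≤ Real.sqrt N → vecNorm (ktx - kx) ≤ Real.sqrt N * ε →
      |dotProduct ktx αt - dotProduct kx α| / (vecNorm y / Real.sqrt N)
        ≤ ((N : ℝ) ^ 2 / σ ^ 4 + N / σ ^ 2) * ε := by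
  have hNpos : 0 < N := by
    rcases Nat.eq_zero_or_pos N with h | h
    · subst h; exact absurd (funext fun i => i.elim0) hy
    · exact h
  have hyn : 0 < vecNorm y := by
    rw [vecNorm_eq, norm_pos_iff]
    intro h
    apply hy
    have := congrArg (WithLp.equiv 2 (Fin N → ℝ)) h
    simpa using this
  have ha : σ ^ 2 * vecNorm α ≤ vecNorm y := by rw [← hα]; exact lower hK hσ α
  have hat : σ ^ 2 * vecNorm αt ≤ vecNorm y := by rw [← hαt]; exact lower hKt hσ αt
  have hdiffvec : (Ktil + σ ^ 2 • 1).mulVec (αt - α) = (K - Ktil).mulVec α := by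
    rw [Matrix.mulVec_sub, hαt, ← hα, Matrix.sub_mulVec, Matrix.add_mulVec, Matrix.add_mulVec]
    abel
  have hopn : opNorm (K - Ktil) ≤ N * ε := by
    rw [show K - Ktil = -(Ktil - K) by rw [neg_sub], opNorm, map_neg, norm_neg]
    exact hKKt
  have hd : σ ^ 2 * vecNorm (αt - α) ≤ N * ε * vecNorm α := by
    calc σ ^ 2 * vecNorm (αt - α) ≤ vecNorm ((Ktil + σ ^ 2 • 1).mulVec (αt - α)) :=
          lower hKt hσ _
      _ = vecNorm ((K - Ktil).mulVec α) := by rw [hdiffvec]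
      _ ≤ opNorm (K - Ktil) * vecNorm α := mulVec_norm_le _ _
      _ ≤ N * ε * vecNorm α := mul_le_mul_of_nonneg_right hopn (vecNorm_nonneg _)
  have e1 : K.mulVec α + σ ^ 2 • α = y := by
    have h := hα
    rwa [Matrix.add_mulVec, Matrix.smul_mulVec, Matrix.one_mulVec] at h
  have e2 : Ktil.mulVec αt + σ ^ 2 • αt = y := by
    have h := hαt
    rwa [Matrix.add_mulVec, Matrix.smul_mulVec, Matrix.one_mulVec] at h
  have hμ : Ktil.mulVec αt - K.mulVec α = σ ^ 2 • (α - αt) := by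
    have g1 : K.mulVec α = y - σ ^ 2 • α := eq_sub_of_add_eq e1
    have g2 : Ktil.mulVec αt = y - σ ^ 2 • αt := eq_sub_of_add_eq e2
    rw [g1, g2, smul_sub]
    abel
  have hveq : vecNorm (Ktil.mulVec αt - K.mulVec α) = σ ^ 2 * vecNorm (αt - α) := by
    rw [hμ, vecNorm_smul, abs_of_pos (by positivity), show α - αt = -(αt - α) by rw [neg_sub],
      vecNorm_neg]
  constructor
  · rw [hveq, div_le_iff₀ hyn, show (N : ℝ) / σ ^ 2 * ε * vecNorm y = N * ε * vecNorm y / σ ^ 2 by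
      ring, le_div_iff₀ (by positivity : (0:ℝ) < σ ^ 2)]
    nlinarith [mul_le_mul_of_nonneg_left hd (sq_nonneg σ),
      mul_le_mul_of_nonneg_left ha (mul_nonneg (Nat.cast_nonneg (α := ℝ) N) hε.le)]
  · intro kx ktx hkx hktx
    set s := Real.sqrt N with hsdef
    have hspos : 0 < s := Real.sqrt_pos.2 (by exact_mod_cast hNpos)
    have hs : s * s = (N : ℝ) := Real.mul_self_sqrt (Nat.cast_nonneg N)
    set T := |dotProduct ktx αt - dotProduct kx α| with hTdef
    set dn := vecNorm (αt - α) with hdndef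
    set at' := vecNorm αt with hatdef
    have hb2 : T ≤ s * ε * at' + s * dn := by
      have split : dotProduct ktx αt - dotProduct kx α
          = dotProduct (ktx - kx) αt + dotProduct kx (αt - α) := by
        rw [sub_dotProduct, dotProduct_sub]
        ring
      calc T = |dotProduct (ktx - kx) αt + dotProduct kx (αt - α)| := by
            rw [hTdef, split]
        _ ≤ |dotProduct (ktx - kx) αt| + |dotProduct kx (αt - α)| := abs_add_le _ _
        _ ≤ vecNorm (ktx - kx) * at' + vecNorm kx * dn :=
            add_le_add (dot_abs_le _ _) (dot_abs_le _ _)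
        _ ≤ s * ε * at' + s * dn := add_le_add
            (mul_le_mul_of_nonneg_right hktx (vecNorm_nonneg _))
            (mul_le_mul_of_nonneg_right hkx (vecNorm_nonneg _))
    rw [div_le_iff₀ (by positivity : (0:ℝ) < vecNorm y / s)]
    have hconv : (((N : ℝ) ^ 2 / σ ^ 4 + N / σ ^ 2) * ε) * (vecNorm y / s)
        = ((N : ℝ) ^ 2 * ε * vecNorm y + N * σ ^ 2 * ε * vecNorm y) / (σ ^ 4 * s) := by
      field_simp
    rw [hconv, le_div_iff₀ (by positivity : (0:ℝ) < σ ^ 4 * s)]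
    have hA : (N : ℝ) * ε * σ ^ 4 * at' ≤ N * σ ^ 2 * ε * vecNorm y := by
      calc (N : ℝ) * ε * σ ^ 4 * at' = (N * ε * σ ^ 2) * (σ ^ 2 * at') := by ring
        _ ≤ (N * ε * σ ^ 2) * vecNorm y := mul_le_mul_of_nonneg_left hat (by positivity)
        _ = N * σ ^ 2 * ε * vecNorm y := by ring
    have hB : (N : ℝ) * σ ^ 4 * dn ≤ (N : ℝ) ^ 2 * ε * vecNorm y := by
      calc (N : ℝ) * σ ^ 4 * dn = ((N : ℝ) * σ ^ 2) * (σ ^ 2 * dn) := by ring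
        _ ≤ ((N : ℝ) * σ ^ 2) * (N * ε * vecNorm α) := mul_le_mul_of_nonneg_left hd (by positivity)
        _ = ((N : ℝ) ^ 2 * ε) * (σ ^ 2 * vecNorm α) := by ring
        _ ≤ ((N : ℝ) ^ 2 * ε) * vecNorm y := mul_le_mul_of_nonneg_left ha (by positivity)
        _ = (N : ℝ) ^ 2 * ε * vecNorm y := by ring
    calc T * (σ ^ 4 * s) ≤ (s * ε * at' + s * dn) * (σ ^ 4 * s) :=
          mul_le_mul_of_nonneg_right hb2 (by positivity)
      _ = (s * s) * ε * σ ^ 4 * at' + (s * s) * σ ^ 4 * dn := by ring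
      _ = (N : ℝ) * ε * σ ^ 4 * at' + (N : ℝ) * σ ^ 4 * dn := by rw [hs]
      _ ≤ (N : ℝ) ^ 2 * ε * vecNorm y + N * σ ^ 2 * ε * vecNorm y := by
          linarith [hA, hB]
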